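/- Let p > 1 and let Ỹ : [1,∞) → (0,∞) be C¹ with Ỹ(R) ≥ a > 0 for all R, and suppose Ỹ'(R)/Ỹ(R)^p ≥ c R^{−1} μ(a R^{−θ}) for all R ≥ 1, where θ > 0, c > 0 and μ is increasing and nonnegative. Then for every R ≥ 1: (1/(p−1)) a^{1−p} ≥ (c/θ) ∫_{aR^{−θ}}^{a} μ(τ)/τ dτ. -/

import Mathlib

open Set MeasureTheory

/-- Key blow-up ODE argument: if `Ỹ` is `C¹` on `[1,∞)` with `Ỹ ≥ a > 0` and
`Ỹ'(R)/Ỹ(R)^p ≥ c R⁻¹ μ(a R^{−θ})` for all `R ≥ 1`, where `p > 1`, `θ, c > 0` and `μ`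
is increasing and nonnegative, then for every `R ≥ 1`,
`(1/(p−1)) a^{1−p} ≥ (c/θ) ∫_{aR^{−θ}}^a μ(τ)/τ dτ`. -/
theorem blowup_ode_integral_bound
    (p a c θ : ℝ) (hp : 1 < p) (ha : 0 < a) (hc : 0 < c) (hθ : 0 < θ)
    (μ : ℝ → ℝ) (hmono : Monotone μ) (hnonneg : ∀ τ, 0 ≤ μ τ)
    (Y Y' : ℝ → ℝ)
    (hderiv : ∀ R : ℝ, 1 ≤ R → HasDerivAt Y (Y' R) R)
    (hY'cont : ContinuousOn Y' (Ici 1))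
    (hYa : ∀ R : ℝ, 1 ≤ R → a ≤ Y R)
    (hineq : ∀ R : ℝ, 1 ≤ R → c * R⁻¹ * μ (a * R ^ (-θ)) ≤ Y' R / (Y R) ^ p) :
    ∀ R : ℝ, 1 ≤ R →
      (c/θ) * (∫ τ in (a * R ^ (-θ))..a, μ τ / τ) ≤ (1/(p-1)) * a ^ (1-p) := by
  intro R hR
  have hRpos : (0:ℝ) < R := lt_of_lt_of_le one_pos hR
  set b : ℝ := a * R ^ (-θ) with hbdef
  have hbpos : 0 < b := mul_pos ha (Real.rpow_pos_of_pos hRpos _)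
  have hba : b ≤ a := by
    have h1 : R ^ (-θ) ≤ 1 := by
      calc R ^ (-θ) ≤ R ^ (0:ℝ) :=
            Real.rpow_le_rpow_of_exponent_le hR (by linarith)
        _ = 1 := Real.rpow_zero R
    calc b = a * R ^ (-θ) := rfl
      _ ≤ a * 1 := by nlinarith
      _ = a := mul_one a
  set f : ℝ → ℝ := fun r => a * r ^ (-θ) with hfdef
  set f' : ℝ → ℝ := fun r => a * (-θ * r ^ (-θ - 1)) with hf'def
  have hfd : ∀ x ∈ Icc (1:ℝ) R, HasDerivAt f (f' x) x := by
    intro x hx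
    have hx0 : x ≠ 0 := by
      have : (0:ℝ) < x := lt_of_lt_of_le one_pos hx.1
      exact this.ne'
    exact (Real.hasDerivAt_rpow_const (Or.inl hx0)).const_mul a
  -- strict antitonicity of f on Icc 1 R
  have hanti : StrictAntiOn f (Icc 1 R) := by
    intro x hx y hy hxy
    have hx0 : (0:ℝ) < x := lt_of_lt_of_le one_pos hx.1
    have : y ^ (-θ) < x ^ (-θ) :=
      Real.rpow_lt_rpow_of_neg hx0 hxy (by linarith)
    simpa [hfdef] using (mul_lt_mul_of_pos_left this ha)
  have hinj : InjOn f (Icc 1 R) := hanti.injOn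
  have hfcont : ContinuousOn f (Icc 1 R) := by
    apply continuousOn_const.mul
    apply ContinuousOn.rpow_const continuousOn_id
    intro x hx
    exact Or.inl (lt_of_lt_of_le one_pos hx.1).ne'
  have hf1 : f 1 = a := by simp [hfdef]
  have hfR : f R = b := rfl
  have himg : f '' Icc 1 R = Icc b a := by
    apply Subset.antisymm
    · have := (hanti.antitoneOn).image_Icc_subset
      rwa [hf1, hfR] at this
    · have := intermediate_value_Icc' hR hfcont
      rwa [hf1, hfR] at this
  -- change of variables
  have key := integral_image_eq_integral_abs_deriv_smul measurableSet_Icc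
      (fun x hx => (hfd x hx).hasDerivWithinAt) hinj (fun τ => μ τ / τ)
  rw [himg] at key
  -- simplify the right-hand side of key
  have hcongr : ∀ r ∈ Icc (1:ℝ) R,
      |f' r| • (μ (f r) / f r) = θ * (r⁻¹ * μ (f r)) := by
    intro r hr
    have hr0 : (0:ℝ) < r := lt_of_lt_of_le one_pos hr.1
    have hrpow : (0:ℝ) < r ^ (-θ) := Real.rpow_pos_of_pos hr0 _
    have hrpow1 : (0:ℝ) < r ^ (-θ - 1) := Real.rpow_pos_of_pos hr0 _
    have habs : |f' r| = a * θ * r ^ (-θ - 1) := by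
      have : f' r = -(a * θ * r ^ (-θ - 1)) := by simp [hf'def]; ring
      rw [this, abs_neg, abs_of_pos (by positivity)]
    have hsplit : r ^ (-θ - 1) = r ^ (-θ) * r⁻¹ := by
      rw [show -θ - 1 = -θ + (-1) by ring, Real.rpow_add hr0, Real.rpow_neg_one]
    rw [smul_eq_mul, habs, hsplit]
    have hfr : f r = a * r ^ (-θ) := rfl
    rw [hfr]
    field_simp
  rw [setIntegral_congr_fun measurableSet_Icc hcongr] at key
  rw [MeasureTheory.integral_const_mul] at key
  -- convert set integrals to interval integrals
  have hIcc1 : ∫ τ in Icc b a, μ τ / τ = ∫ τ in b..a, μ τ / τ := by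
    rw [intervalIntegral.integral_of_le hba, integral_Icc_eq_integral_Ioc]
  have hIcc2 : ∫ r in Icc (1:ℝ) R, r⁻¹ * μ (f r) = ∫ r in (1:ℝ)..R, r⁻¹ * μ (f r) := by
    rw [intervalIntegral.integral_of_le hR, integral_Icc_eq_integral_Ioc]
  rw [hIcc1, hIcc2] at key
  -- key : ∫ τ in b..a, μ τ / τ = θ * ∫ r in 1..R, r⁻¹ * μ (f r)
  have hlhs : (c/θ) * (∫ τ in b..a, μ τ / τ)
      = ∫ r in (1:ℝ)..R, c * (r⁻¹ * μ (f r)) := by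
    rw [key, intervalIntegral.integral_const_mul]
    field_simp
  -- integrability of the lower function
  have hmeas : AEStronglyMeasurable (fun r : ℝ => c * (r⁻¹ * μ (f r)))
      (volume.restrict (Icc (1:ℝ) R)) := by
    have h1 : AEMeasurable f (volume.restrict (Icc (1:ℝ) R)) :=
      hfcont.aemeasurable measurableSet_Icc
    have h2 : AEMeasurable (fun r => μ (f r)) (volume.restrict (Icc (1:ℝ) R)) :=
      hmono.measurable.comp_aemeasurable h1
    have h3 : AEMeasurable (fun r : ℝ => r⁻¹) (volume.restrict (Icc (1:ℝ) R)) :=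
      measurable_inv.aemeasurable
    exact (((h3.mul h2).const_mul c)).aestronglyMeasurable
  have hint1 : IntervalIntegrable (fun r => c * (r⁻¹ * μ (f r))) volume 1 R := by
    rw [intervalIntegrable_iff_integrableOn_Icc_of_le hR]
    apply Integrable.mono' (integrableOn_const (C := c * μ a) measure_Icc_lt_top.ne)
      hmeas
    · filter_upwards [ae_restrict_mem measurableSet_Icc] with r hr
      have hr1 : (1:ℝ) ≤ r := hr.1
      have hr0 : (0:ℝ) < r := lt_of_lt_of_le one_pos hr1
      have hrinv : r⁻¹ ≤ 1 := inv_le_one_of_one_le₀ hr1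
      have hfra : f r ≤ a := by
        have : r ^ (-θ) ≤ 1 := by
          calc r ^ (-θ) ≤ r ^ (0:ℝ) :=
                Real.rpow_le_rpow_of_exponent_le hr1 (by linarith)
            _ = 1 := Real.rpow_zero r
        calc f r = a * r ^ (-θ) := rfl
          _ ≤ a * 1 := by nlinarith
          _ = a := mul_one a
      have hμ : μ (f r) ≤ μ a := hmono hfra
      have h0 : 0 ≤ c * (r⁻¹ * μ (f r)) :=
        mul_nonneg hc.le (mul_nonneg (inv_nonneg.2 hr0.le) (hnonneg _))
      rw [Real.norm_eq_abs, abs_of_nonneg h0]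
      have := hnonneg (f r)
      calc c * (r⁻¹ * μ (f r)) ≤ c * (1 * μ a) := by
            apply mul_le_mul_of_nonneg_left _ hc.le
            apply mul_le_mul hrinv hμ (hnonneg _) one_pos.le
        _ = c * μ a := by ring
  -- continuity / integrability of the upper function
  have hYcont : ContinuousOn Y (Icc 1 R) := fun x hx =>
    (hderiv x hx.1).continuousAt.continuousWithinAt
  have hYpos : ∀ x ∈ Icc (1:ℝ) R, (0:ℝ) < Y x := fun x hx =>
    lt_of_lt_of_le ha (hYa x hx.1)
  have hgcont : ContinuousOn (fun r => Y' r / (Y r) ^ p) (Icc 1 R) := by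
    apply ContinuousOn.div
    · exact hY'cont.mono (fun x hx => hx.1)
    · exact hYcont.rpow_const (fun x hx => Or.inl (hYpos x hx).ne')
    · intro x hx
      exact (Real.rpow_pos_of_pos (hYpos x hx) p).ne'
  have hint2 : IntervalIntegrable (fun r => Y' r / (Y r) ^ p) volume 1 R := by
    rw [intervalIntegrable_iff_integrableOn_Icc_of_le hR]
    exact hgcont.integrableOn_Icc
  -- comparison
  have hcomp : (∫ r in (1:ℝ)..R, c * (r⁻¹ * μ (f r)))
      ≤ ∫ r in (1:ℝ)..R, Y' r / (Y r) ^ p := by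
    apply intervalIntegral.integral_mono_on hR hint1 hint2
    intro x hx
    have := hineq x hx.1
    calc c * (x⁻¹ * μ (f x)) = c * x⁻¹ * μ (a * x ^ (-θ)) := by rw [hfdef]; ring
      _ ≤ Y' x / (Y x) ^ p := hineq x hx.1
  -- FTC
  have hFTC : (∫ r in (1:ℝ)..R, Y' r / (Y r) ^ p)
      = Y R ^ (1-p) / (1-p) - Y 1 ^ (1-p) / (1-p) := by
    apply intervalIntegral.integral_eq_sub_of_hasDerivAt _ hint2
    intro x hx
    rw [uIcc_of_le hR] at hx
    have hx1 : (1:ℝ) ≤ x := hx.1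
    have hYx : (0:ℝ) < Y x := lt_of_lt_of_le ha (hYa x hx1)
    have h1 : HasDerivAt (fun r => Y r ^ (1-p))
        ((1-p) * Y x ^ (1-p-1) * Y' x) x := by
      exact (Real.hasDerivAt_rpow_const (Or.inl hYx.ne')).comp x (hderiv x hx1)
    have h2 := h1.div_const (1-p)
    refine h2.congr_deriv (Eq.symm ?_)
    have hp1 : (1:ℝ) - p ≠ 0 := by linarith
    have : Y x ^ (1-p-1) = (Y x ^ p)⁻¹ := by
      rw [show (1:ℝ)-p-1 = -p by ring, Real.rpow_neg hYx.le]
    rw [this]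
    field_simp
  -- final bound
  have hbound : Y R ^ (1-p) / (1-p) - Y 1 ^ (1-p) / (1-p) ≤ (1/(p-1)) * a ^ (1-p) := by
    have hYR : (0:ℝ) < Y R := lt_of_lt_of_le ha (hYa R hR)
    have hYRpow : (0:ℝ) < Y R ^ (1-p) := Real.rpow_pos_of_pos hYR _
    have hY1 : Y 1 ^ (1-p) ≤ a ^ (1-p) :=
      Real.rpow_le_rpow_of_nonpos ha (hYa 1 le_rfl) (by linarith)
    have hp1 : (0:ℝ) < p - 1 := by linarith
    have e1 : Y R ^ (1-p) / (1-p) - Y 1 ^ (1-p) / (1-p)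
        = (Y 1 ^ (1-p) - Y R ^ (1-p)) / (p-1) := by
      have hne : (1:ℝ) - p ≠ 0 := by linarith
      field_simp
      ring
    rw [e1]
    rw [div_le_iff₀ hp1]
    have : (1/(p-1)) * a ^ (1-p) * (p-1) = a ^ (1-p) := by field_simp
    rw [this]
    nlinarith
  calc (c/θ) * (∫ τ in b..a, μ τ / τ)
      = ∫ r in (1:ℝ)..R, c * (r⁻¹ * μ (f r)) := hlhs
    _ ≤ ∫ r in (1:ℝ)..R, Y' r / (Y r) ^ p := hcomp
    _ = Y R ^ (1-p) / (1-p) - Y 1 ^ (1-p) / (1-p) := hFTC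
    _ ≤ (1/(p-1)) * a ^ (1-p) := hbound
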